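/- Let X be a smooth manifold, β a free homotopy class of loops in X which is not a power (i.e., for any basepoint x₀ on a representative, the corresponding based class β_{x₀} ∈ π₁(X, x₀) cannot be written as αⁿ with n > 1). Then the S¹-reparametrization action on the component L_β X of the free loop space, given by (t·o)(τ) = o(t+τ), is free. -/

import Mathlib

open Set

noncomputable section

/-- The circle `ℝ/ℤ`. -/
abbrev Circle1 : Type := AddCircle (1 : ℝ)

/-- Free loops in `X`: continuous maps `S¹ = ℝ/ℤ → X`. -/
abbrev FreeLoop (X : Type*) [TopologicalSpace X] : Type _ := C(Circle1, X)

/-- The setoid of free homotopy of loops. -/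
def freeHomotopySetoid (X : Type*) [TopologicalSpace X] : Setoid (FreeLoop X) :=
  ⟨ContinuousMap.Homotopic, ContinuousMap.Homotopic.equivalence⟩

/-- Free homotopy classes of loops in `X`; this is `π₁(X)` in the sense of the paper. -/
def FreeLoopClass (X : Type*) [TopologicalSpace X] : Type _ :=
  Quotient (freeHomotopySetoid X)

/-- The free homotopy class of a loop. -/
def loopClass {X : Type*} [TopologicalSpace X] (γ : FreeLoop X) : FreeLoopClass X :=
  Quotient.mk (freeHomotopySetoid X) γ

/-- An exhaustion of `X` by nested compact sets. -/
def IsCompactExhaustion {X : Type*} [TopologicalSpace X] (K : ℕ → Set X) : Prop :=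
  (∀ i, IsCompact (K i)) ∧ Monotone K ∧ (⋃ i, K i) = Set.univ

/-- `β` is boundary compressible with respect to the exhaustion `K`: for every `i`, `β` is in the
image of `π₁(X - K i) → π₁(X)`, i.e. `β` is represented by a loop avoiding `K i`. -/
def CompressibleWrt {X : Type*} [TopologicalSpace X] (K : ℕ → Set X)
    (β : FreeLoopClass X) : Prop :=
  ∀ i, ∃ γ : FreeLoop X, (∀ t, γ t ∉ K i) ∧ loopClass γ = β

/-- `β` is boundary incompressible: not boundary compressible (w.r.t. any compact exhaustion;
the notion is independent of the choice). -/
def BoundaryIncompressible {X : Type*} [TopologicalSpace X] (β : FreeLoopClass X) : Prop :=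
  ∀ K : ℕ → Set X, IsCompactExhaustion K → ¬ CompressibleWrt K β

/-- The `S¹`-reparametrization action: `(θ · γ)(τ) = γ(τ + θ)`. -/
def rotateLoop {X : Type*} [TopologicalSpace X] (θ : Circle1) (γ : FreeLoop X) : FreeLoop X :=
  γ.comp ⟨fun t => t + θ, by continuity⟩

/-- The based path `[0,1] → X` underlying a free loop. -/
def basedPath {X : Type*} [TopologicalSpace X] (γ : FreeLoop X) : Path (γ 0) (γ 0) where
  toFun t := γ (((t : ℝ) : Circle1))
  continuous_toFun := γ.continuous.comp ((AddCircle.continuous_mk' 1).comp continuous_subtype_val)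
  source' := by norm_cast
  target' := by
    show γ ((((1 : unitInterval) : ℝ)) : Circle1) = γ 0
    norm_num [show (((1 : ℝ)) : Circle1) = 0 from AddCircle.coe_period 1]

/-- The based homotopy class `β_{x₀} ∈ π₁(X, γ 0)` of a free loop `γ`. -/
def basedClass {X : Type*} [TopologicalSpace X] (γ : FreeLoop X) :
    FundamentalGroup X (γ 0) :=
  FundamentalGroup.fromPath ⟦basedPath γ⟧

/-- `β` is at most a `k`-power: whenever a based representative of `β` is written as `αⁿ` with
`n > 0`, then `n ≤ k`. -/
def IsAtMostKPower {X : Type*} [TopologicalSpace X] (β : FreeLoopClass X) (k : ℕ) : Prop :=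
  ∀ γ : FreeLoop X, loopClass γ = β →
    ∀ (α : FundamentalGroup X (γ 0)) (n : ℕ), 0 < n → basedClass γ = α ^ n → n ≤ k

/-- `β` is not a power: it is at most a `1`-power. -/
def NotAPower {X : Type*} [TopologicalSpace X] (β : FreeLoopClass X) : Prop :=
  IsAtMostKPower β 1

section AuxForStatement7

attribute [local instance] Path.Homotopic.setoid

section Aux
variable {X : Type*} [TopologicalSpace X]

lemma line_homotopic (L : C(ℝ, X)) {x y : X}
    (p p' : Path x y) (f g : unitInterval → ℝ) (hfc : Continuous f) (hgc : Continuous g)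
    (hf : ∀ t, p t = L (f t)) (hg : ∀ t, p' t = L (g t))
    (h0 : f 0 = g 0) (h1 : f 1 = g 1) : Path.Homotopic p p' := by
  refine ⟨{ toFun := fun st => L ((1 - (st.1 : ℝ)) * f st.2 + (st.1 : ℝ) * g st.2)
            continuous_toFun := by fun_prop
            map_zero_left := ?_
            map_one_left := ?_
            prop' := ?_ }⟩
  · intro t; simp [hf t]
  · intro t; simp [hg t]
  · rintro s t (rfl | rfl)
    · have : (1 - (s : ℝ)) * f 0 + (s : ℝ) * g 0 = f 0 := by rw [← h0]; ring
      simp only [ContinuousMap.coe_mk, this]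
      exact (hf 0).symm
    · have : (1 - (s : ℝ)) * f 1 + (s : ℝ) * g 1 = f 1 := by rw [← h1]; ring
      simp only [ContinuousMap.coe_mk, this]
      exact (hf 1).symm

def pk (L : C(ℝ, X)) (c : ℝ) {x : X} (hx : L 0 = x)
    (hLn : ∀ (n : ℕ) (s : ℝ), L (s + n * c) = L s) (k : ℕ) : Path x x where
  toFun t := L (k * t * c)
  continuous_toFun := by fun_prop
  source' := by simpa using hx
  target' := by
    have := hLn k 0
    simp only [zero_add] at this
    simpa using this.trans hx

lemma pk_succ_homotopic (L : C(ℝ, X)) (c : ℝ) {x : X} (hx : L 0 = x)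
    (hLn : ∀ (n : ℕ) (s : ℝ), L (s + n * c) = L s) (k : ℕ) :
    Path.Homotopic (pk L c hx hLn (k + 1)) ((pk L c hx hLn k).trans (pk L c hx hLn 1)) := by
  refine line_homotopic L _ _ (fun t => ((k : ℝ) + 1) * t * c)
    (fun t => if (t : ℝ) ≤ 1 / 2 then (k : ℝ) * (2 * t) * c else (2 * (t : ℝ) - 1 + k) * c)
    (by fun_prop) ?_ ?_ ?_ ?_ ?_
  · apply Continuous.if_le (by fun_prop) (by fun_prop) (by fun_prop) continuous_const
    intro t ht
    rw [ht]; ring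
  · intro t
    simp only [pk, Path.coe_mk_mk, ContinuousMap.coe_mk]
    push_cast
    ring_nf
  · intro t
    show _ = L (if (t : ℝ) ≤ 1 / 2 then (k : ℝ) * (2 * t) * c else (2 * (t : ℝ) - 1 + k) * c)
    rw [Path.trans_apply]
    split_ifs with h
    · simp only [pk, ContinuousMap.coe_mk, Path.coe_mk_mk]
    · simp only [pk, ContinuousMap.coe_mk, Path.coe_mk_mk, Nat.cast_one, one_mul]
      have := hLn k ((2 * (t : ℝ) - 1) * c)
      rw [show (2 * (t : ℝ) - 1) * c + (k : ℝ) * c = (2 * (t : ℝ) - 1 + k) * c by ring] at this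
      rw [← this]
  · simp
  · simp only [Icc.coe_one]
    rw [if_neg (by norm_num)]
    ring

lemma pk_zero (L : C(ℝ, X)) (c : ℝ) {x : X} (hx : L 0 = x)
    (hLn : ∀ (n : ℕ) (s : ℝ), L (s + n * c) = L s) :
    pk L c hx hLn 0 = Path.refl x := by
  ext t; simp [pk, hx]

open CategoryTheory in
lemma fromPath_refl_eq_one {x : X} :
    (FundamentalGroup.fromPath (X := TopCat.of X) ⟦Path.refl x⟧ : FundamentalGroup X x) = 1 := by
  rfl

open CategoryTheory in
lemma fromPath_pk_pow (L : C(ℝ, X)) (c : ℝ) {x : X} (hx : L 0 = x)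
    (hLn : ∀ (n : ℕ) (s : ℝ), L (s + n * c) = L s) (k : ℕ) :
    (FundamentalGroup.fromPath (X := TopCat.of X) ⟦pk L c hx hLn k⟧ : FundamentalGroup X x)
      = (FundamentalGroup.fromPath (X := TopCat.of X) ⟦pk L c hx hLn 1⟧ :
          FundamentalGroup X x) ^ k := by
  induction k with
  | zero => rw [pk_zero, pow_zero]; exact fromPath_refl_eq_one
  | succ k ih =>
    have h1 : (⟦pk L c hx hLn (k + 1)⟧ : Path.Homotopic.Quotient x x)
        = ⟦(pk L c hx hLn k).trans (pk L c hx hLn 1)⟧ :=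
      Quotient.sound (pk_succ_homotopic L c hx hLn k)
    rw [h1, pow_succ', ← ih]
    rfl

lemma const_of_eqOn_dense {E : Type*} [NormedAddCommGroup E] [NormedSpace ℝ E]
    {X : Type*} [TopologicalSpace X] [ChartedSpace E X]
    {Y : Type*} [TopologicalSpace Y] (γ : C(Y, X)) {D : Set Y} (hD : Dense D) {c : X}
    (hc : ∀ d ∈ D, γ d = c) (t : Y) : γ t = c := by
  set e := chartAt E (γ t) with he
  have hBo : IsOpen (γ ⁻¹' e.source) := e.open_source.preimage γ.continuous
  have htB : t ∈ γ ⁻¹' e.source := mem_chart_source E (γ t)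
  obtain ⟨d₀, hd₀D, hd₀B⟩ := hD.exists_mem_open hBo ⟨t, htB⟩
  have hcB : c ∈ e.source := by rw [← hc d₀ hd₀D]; exact hd₀B
  have hDB : Dense ((Subtype.val : (γ ⁻¹' e.source) → Y) ⁻¹' D) :=
    hD.preimage hBo.isOpenMap_subtype_val
  have hcont : Continuous (fun b : (γ ⁻¹' e.source) => e (γ (b : Y))) :=
    e.continuousOn.comp_continuous (γ.continuous.comp continuous_subtype_val) fun b => b.2
  have heq : (fun b : (γ ⁻¹' e.source) => e (γ (b : Y))) = fun _ => e c :=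
    Continuous.ext_on hDB hcont continuous_const fun b hb => by rw [hc _ hb]
  have := congrFun heq ⟨t, htB⟩
  exact e.injOn htB hcB this

lemma dense_zmultiples_of_addOrderOf_eq_zero {θ : Circle1} (h : addOrderOf θ = 0) :
    Dense (Set.range fun n : ℤ => n • θ) := by
  have hsurj : Function.Surjective (fun s : ℝ => (s : Circle1)) :=
    Quotient.mk''_surjective
  set S' : AddSubgroup ℝ :=
    (AddSubgroup.zmultiples θ).comap (QuotientAddGroup.mk' (AddSubgroup.zmultiples (1 : ℝ)))
    with hS'
  have hmem : ∀ s : ℝ, s ∈ S' ↔ (s : Circle1) ∈ AddSubgroup.zmultiples θ := fun s => Iff.rfl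
  rcases S'.dense_or_cyclic with hd | ⟨a, ha⟩
  · have himg : Dense ((fun s : ℝ => (s : Circle1)) '' S') :=
      hsurj.denseRange.dense_image (AddCircle.continuous_mk' 1) hd
    refine himg.mono ?_
    rintro _ ⟨s, hs, rfl⟩
    obtain ⟨n, hn⟩ := AddSubgroup.mem_zmultiples_iff.mp ((hmem s).mp hs)
    exact ⟨n, hn⟩
  · exfalso
    rw [← AddSubgroup.zmultiples_eq_closure] at ha
    obtain ⟨θ₀, rfl⟩ := hsurj θ
    have h1 : (1 : ℝ) ∈ S' := by
      rw [hmem]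
      rw [show ((1 : ℝ) : Circle1) = 0 from AddCircle.coe_period 1]
      exact zero_mem _
    have hθ : θ₀ ∈ S' := by
      rw [hmem]
      exact AddSubgroup.mem_zmultiples _
    rw [ha] at h1 hθ
    obtain ⟨n, hn⟩ := AddSubgroup.mem_zmultiples_iff.mp h1
    obtain ⟨m, hm⟩ := AddSubgroup.mem_zmultiples_iff.mp hθ
    have hn0 : n ≠ 0 := by rintro rfl; simp at hn
    have hfin : IsOfFinAddOrder ((θ₀ : ℝ) : Circle1) := by
      refine isOfFinAddOrder_iff_zsmul_eq_zero.mpr ⟨n, hn0, ?_⟩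
      have : (n : ℤ) • θ₀ = (m : ℝ) := by
        rw [← hm, smul_comm, hn]
        simp
      rw [← AddCircle.coe_zsmul, this]
      exact (AddCircle.coe_eq_zero_iff 1).mpr ⟨m, by simp⟩
    rw [addOrderOf_eq_zero_iff] at h
    exact h hfin

lemma inv_q_mem_zmultiples {θ : Circle1} {q : ℕ} (hq : 0 < q) (h : addOrderOf θ = q) :
    (((q : ℝ)⁻¹ : ℝ) : Circle1) ∈ AddSubgroup.zmultiples θ := by
  obtain ⟨m, hmq, hgcd, hm⟩ := (AddCircle.addOrderOf_eq_pos_iff hq).mp h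
  rw [mul_one] at hm
  set a := Nat.gcdA m q with ha
  set b := Nat.gcdB m q with hb
  have hbezout : (1 : ℤ) = m * a + q * b := by
    have := Nat.gcd_eq_gcd_ab m q
    rw [hgcd] at this; exact_mod_cast this
  have hb' : (1 : ℝ) = m * a + q * b := by exact_mod_cast hbezout
  have hq0 : (q : ℝ) ≠ 0 := Nat.cast_ne_zero.mpr hq.ne'
  rw [← hm]
  refine ⟨a, ?_⟩
  show a • ((((m : ℝ) / q) : ℝ) : Circle1) = _
  rw [← AddCircle.coe_zsmul]
  have key : (a • ((m : ℝ) / q) : ℝ) = (q : ℝ)⁻¹ + (-b : ℤ) := by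
    rw [zsmul_eq_mul]
    push_cast
    field_simp
    linarith [hb']
  rw [key]
  push_cast
  rw [AddCircle.coe_add]
  have : (((-b : ℤ) : ℝ) : Circle1) = 0 := (AddCircle.coe_eq_zero_iff 1).mpr ⟨-b, by simp⟩
  push_cast at this
  rw [this, add_zero]

end Aux
end AuxForStatement7

/-- if the free homotopy class `β` is not a power, then the `S¹`-reparametrization
action on the component `L_β X` of the free loop space is free. -/

theorem reparametrization_action_free_of_not_power
    {E : Type*} [NormedAddCommGroup E] [NormedSpace ℝ E]
    {X : Type*} [TopologicalSpace X] [ChartedSpace E X]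
    (β : FreeLoopClass X) (hβ : NotAPower β) :
    ∀ γ : FreeLoop X, loopClass γ = β → ∀ θ : Circle1, rotateLoop θ γ = γ → θ = 0 := by
  intro γ hγ θ hθ
  by_contra hne
  have hrot : ∀ {θ' : Circle1}, rotateLoop θ' γ = γ → ∀ t, γ (t + θ') = γ t := by
    intro θ' h t
    exact DFunLike.congr_fun h t
  set S : AddSubgroup Circle1 :=
    { carrier := {θ' | rotateLoop θ' γ = γ}
      zero_mem' := by
        ext t
        show γ (t + 0) = γ t
        rw [add_zero]
      add_mem' := by
        intro a b ha hb
        ext t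
        show γ (t + (a + b)) = γ t
        rw [← add_assoc, show t + a + b = t + b + a by abel, hrot ha, hrot hb]
      neg_mem' := by
        intro a ha
        ext t
        show γ (t + -a) = γ t
        conv_rhs => rw [show t = t + -a + a by abel]
        exact (hrot ha (t + -a)).symm } with hS
  have hθS : θ ∈ S := hθ
  have hzm : AddSubgroup.zmultiples θ ≤ S := by
    rintro _ ⟨n, rfl⟩
    exact zsmul_mem hθS n
  rcases Nat.eq_zero_or_pos (addOrderOf θ) with hq0 | hqpos
  · -- infinite order: γ is constant, so its based class is a square, contradiction
    have hdense := dense_zmultiples_of_addOrderOf_eq_zero hq0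
    have hconstD : ∀ d ∈ Set.range (fun n : ℤ => n • θ), γ d = γ 0 := by
      rintro _ ⟨n, rfl⟩
      have := hrot (hzm ⟨n, rfl⟩) 0
      rwa [zero_add] at this
    have hconst : ∀ t, γ t = γ 0 := const_of_eqOn_dense (E := E) γ hdense hconstD
    have hbp : basedPath γ = Path.refl (γ 0) := by
      ext t
      simp only [basedPath, Path.coe_mk_mk, ContinuousMap.coe_mk, Path.refl_apply]
      exact hconst _
    have h1 : basedClass γ = 1 := by
      rw [basedClass, hbp]
      exact fromPath_refl_eq_one
    have h2 := hβ γ hγ 1 2 (by norm_num) (by rw [h1, one_pow])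
    norm_num at h2
  · -- finite order q ≥ 2 : based class is a q-th power, contradiction
    set q := addOrderOf θ with hqdef
    have hq1 : q ≠ 1 := fun h => hne (AddMonoid.addOrderOf_eq_one_iff.mp h)
    have hq2 : 2 ≤ q := by omega
    have hmem : (((q : ℝ)⁻¹ : ℝ) : Circle1) ∈ AddSubgroup.zmultiples θ :=
      inv_q_mem_zmultiples hqpos rfl
    have hstab : ∀ t, γ (t + (((q : ℝ)⁻¹ : ℝ) : Circle1)) = γ t := hrot (hzm hmem)
    set L : C(ℝ, X) := ⟨fun s => γ ((s : ℝ) : Circle1),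
      γ.continuous.comp (AddCircle.continuous_mk' 1)⟩ with hLdef
    have hx : L 0 = γ 0 := by
      show γ _ = γ 0
      norm_cast
    have hL1 : ∀ s : ℝ, L (s + (q : ℝ)⁻¹) = L s := by
      intro s
      show γ _ = γ _
      rw [AddCircle.coe_add]
      exact hstab _
    have hLn : ∀ (n : ℕ) (s : ℝ), L (s + n * (q : ℝ)⁻¹) = L s := by
      intro n
      induction n with
      | zero => simp
      | succ n ih =>
        intro s
        rw [show s + ((n : ℕ) + 1 : ℕ) * (q : ℝ)⁻¹ = (s + (q : ℝ)⁻¹) + n * (q : ℝ)⁻¹ by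
          push_cast; ring]
        rw [ih, hL1]
    have hq0' : (q : ℝ) ≠ 0 := Nat.cast_ne_zero.mpr hqpos.ne'
    have hbp : basedPath γ = pk L (q : ℝ)⁻¹ hx hLn q := by
      ext t
      show γ _ = L ((q : ℝ) * t * (q : ℝ)⁻¹)
      rw [show (q : ℝ) * t * (q : ℝ)⁻¹ = (t : ℝ) by field_simp]
      rfl
    have hpow : basedClass γ =
        (FundamentalGroup.fromPath (X := TopCat.of X) ⟦pk L (q : ℝ)⁻¹ hx hLn 1⟧ :
          FundamentalGroup X (γ 0)) ^ q := by
      rw [basedClass, hbp]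
      exact fromPath_pk_pow L (q : ℝ)⁻¹ hx hLn q
    have := hβ γ hγ _ q hqpos hpow
    omega
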